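/- Let (M,g) be a perfect fluid space-time of dimension n ≥ 4: R_{kl} = A g_{kl} + B u_k u_l with u^j u_j = −1, and assume ∇_m C_{jkl}{}^m = 0. Set γ = (n−2)A + B. Then ∇_j γ + u_j u^k ∇_k γ = 0; equivalently, the gradient of γ is proportional to u: u_j ∇_k γ = u_k ∇_j γ. -/
import Mathlib


/-!
STATEMENT 2.  Perfect fluid space-time with divergence-free Weyl tensor.
Component-level formalization as in the previous statements.  The hypothesis
∇_m C_{jkl}{}^m = 0 is expressed through its equivalent Codazzi form
∇_k R_{jl} - ∇_l R_{jk} = (1/(2(n-1)))(g_{jl}∇_k R - g_{jk}∇_l R), with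
R_{jl} = A g_{jl} + B u_j u_l expanded by the Leibniz rule, R = nA - B.
γ = (n-2)A + B, so ∇_j γ = (n-2)∇_j A + ∇_j B.
Conclusion: ∇_j γ + u_j u^k ∇_k γ = 0, and equivalently u_j ∇_k γ = u_k ∇_j γ.
-/
theorem perfectFluid_gradient_gamma
    (n : ℕ) (hn : 4 ≤ n) (M : Type*)
    (g ginv : M → Fin n → Fin n → ℝ)
    (A B : M → ℝ) (DA DB : M → Fin n → ℝ)
    (u : M → Fin n → ℝ) (Du : M → Fin n → Fin n → ℝ)
    (hg : ∀ x i j, g x i j = g x j i)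
    (hginv : ∀ x i j, ∑ m, ginv x i m * g x m j = if i = j then (1:ℝ) else 0)
    (hginvsymm : ∀ x i j, ginv x i j = ginv x j i)
    -- u is a unit timelike vector field: u^j u_j = -1
    (hunit : ∀ x, ∑ i, ∑ j, ginv x i j * u x i * u x j = -1)
    -- u has constant length, hence u^l ∇_k u_l = 0
    (hDu : ∀ x k, ∑ l, ∑ m, ginv x l m * u x m * Du x k l = 0)
    -- contracted Bianchi identity ∇^m R_{jm} = (1/2)∇_j R
    (hBianchi : ∀ x j, ∑ a, ∑ m, ginv x a m *
        (DA x a * g x m j + DB x a * u x m * u x j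
          + B x * (Du x a m * u x j + u x m * Du x a j))
      = (1/2) * ((n:ℝ) * DA x j - DB x j))
    -- ∇_m C_{jkl}{}^m = 0, in its equivalent Codazzi form for the Ricci tensor
    (hWeyl : ∀ x k l j,
        (DA x k * g x j l + DB x k * u x j * u x l
          + B x * (Du x k j * u x l + u x j * Du x k l))
        - (DA x l * g x j k + DB x l * u x j * u x k
          + B x * (Du x l j * u x k + u x j * Du x l k))
      = (1/(2*((n:ℝ) - 1))) * (g x j l * ((n:ℝ) * DA x k - DB x k)
          - g x j k * ((n:ℝ) * DA x l - DB x l))) :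
    -- conclusion: ∇_j γ + u_j u^k ∇_k γ = 0, equivalently u_j ∇_k γ = u_k ∇_j γ
    (∀ x j, (((n:ℝ) - 2) * DA x j + DB x j)
        + u x j * (∑ k, ∑ m, ginv x k m * u x m * (((n:ℝ) - 2) * DA x k + DB x k)) = 0)
    ∧ (∀ x j k, u x j * (((n:ℝ) - 2) * DA x k + DB x k)
        = u x k * (((n:ℝ) - 2) * DA x j + DB x j)) := by
  have hN4 : (4:ℝ) ≤ (n:ℝ) := by exact_mod_cast hn
  have hN1 : (n:ℝ) - 1 ≠ 0 := by intro h; linarith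
  have hN2 : (n:ℝ) - 2 ≠ 0 := by intro h; linarith
  have h2N1 : 2*((n:ℝ) - 1) ≠ 0 := by intro h; nlinarith
  -- main pointwise fact: the gradient of γ is proportional to u
  have key : ∀ x, ∃ T : ℝ,
      (∀ k, ((n:ℝ) - 2) * DA x k + DB x k = u x k * T) ∧
      (∑ k, ∑ m, ginv x k m * u x m * (((n:ℝ) - 2) * DA x k + DB x k)) = -T := by
    intro x
    -- the raised vector v^a = g^{am} u_m
    let v : Fin n → ℝ := fun a => ∑ m, ginv x a m * u x m
    have hv : ∀ a, v a = ∑ m, ginv x a m * u x m := fun a => rfl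
    -- contraction facts
    have hv_g : ∀ l, ∑ j, v j * g x j l = u x l := by
      intro l
      calc ∑ j, v j * g x j l = ∑ j, ∑ m, u x m * (ginv x m j * g x j l) := by
            refine Finset.sum_congr rfl fun j _ => ?_
            rw [hv j, Finset.sum_mul]
            refine Finset.sum_congr rfl fun m _ => ?_
            rw [hginvsymm x j m]; ring
        _ = ∑ m, ∑ j, u x m * (ginv x m j * g x j l) := Finset.sum_comm
        _ = ∑ m, u x m * (if m = l then (1:ℝ) else 0) := by
            refine Finset.sum_congr rfl fun m _ => ?_
            rw [← Finset.mul_sum, hginv x m l]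
        _ = u x l := by simp
    have hv_u : ∑ j, v j * u x j = -1 := by
      calc ∑ j, v j * u x j = ∑ j, ∑ m, ginv x j m * u x j * u x m := by
            refine Finset.sum_congr rfl fun j _ => ?_
            rw [hv j, Finset.sum_mul]
            exact Finset.sum_congr rfl fun m _ => by ring
        _ = -1 := hunit x
    have hv_Du : ∀ k, ∑ l, v l * Du x k l = 0 := by
      intro k
      calc ∑ l, v l * Du x k l = ∑ l, ∑ m, ginv x l m * u x m * Du x k l := by
            refine Finset.sum_congr rfl fun l _ => ?_
            rw [hv l, Finset.sum_mul]
        _ = 0 := hDu x k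
    -- contracted Bianchi identity, evaluated
    have F1 : ∀ j, DA x j + (∑ a, v a * DB x a) * u x j
        + B x * ((∑ a, ∑ m, ginv x a m * Du x a m) * u x j)
        + B x * (∑ a, v a * Du x a j) = (1/2) * ((n:ℝ) * DA x j - DB x j) := by
      intro j
      calc DA x j + (∑ a, v a * DB x a) * u x j
            + B x * ((∑ a, ∑ m, ginv x a m * Du x a m) * u x j)
            + B x * (∑ a, v a * Du x a j)
          = ∑ a, ∑ m, ginv x a m *
              (DA x a * g x m j + DB x a * u x m * u x j
                + B x * (Du x a m * u x j + u x m * Du x a j)) := by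
            symm
            have inner : ∀ a, ∑ m, ginv x a m *
                (DA x a * g x m j + DB x a * u x m * u x j
                  + B x * (Du x a m * u x j + u x m * Du x a j))
                = DA x a * (if a = j then (1:ℝ) else 0) + (DB x a * u x j) * v a
                  + (B x * u x j) * (∑ m, ginv x a m * Du x a m)
                  + (B x * Du x a j) * v a := by
              intro a
              have e : ∀ m, ginv x a m *
                  (DA x a * g x m j + DB x a * u x m * u x j
                    + B x * (Du x a m * u x j + u x m * Du x a j))
                  = DA x a * (ginv x a m * g x m j)
                    + (DB x a * u x j) * (ginv x a m * u x m)
                    + (B x * u x j) * (ginv x a m * Du x a m)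
                    + (B x * Du x a j) * (ginv x a m * u x m) := fun m => by ring
              simp only [e]
              rw [Finset.sum_add_distrib, Finset.sum_add_distrib, Finset.sum_add_distrib,
                ← Finset.mul_sum, ← Finset.mul_sum, ← Finset.mul_sum, ← Finset.mul_sum,
                hginv x a j, ← hv a]
            simp only [inner]
            rw [Finset.sum_add_distrib, Finset.sum_add_distrib, Finset.sum_add_distrib]
            have p1 : ∑ a, DA x a * (if a = j then (1:ℝ) else 0) = DA x j := by simp
            have p2 : ∑ a, (DB x a * u x j) * v a = (∑ a, v a * DB x a) * u x j := by
              rw [Finset.sum_mul]; exact Finset.sum_congr rfl fun a _ => by ring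
            have p3 : ∑ a, (B x * u x j) * (∑ m, ginv x a m * Du x a m)
                = B x * ((∑ a, ∑ m, ginv x a m * Du x a m) * u x j) := by
              rw [← Finset.mul_sum]; ring
            have p4 : ∑ a, (B x * Du x a j) * v a = B x * (∑ a, v a * Du x a j) := by
              rw [Finset.mul_sum]; exact Finset.sum_congr rfl fun a _ => by ring
            rw [p1, p2, p3, p4]
        _ = (1/2) * ((n:ℝ) * DA x j - DB x j) := hBianchi x j
    -- the Codazzi equation contracted twice with v
    have F2 : ∀ k, -DA x k + DB x k - (∑ a, v a * DA x a) * u x k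
        + (∑ a, v a * DB x a) * u x k + B x * (∑ a, v a * Du x a k)
        = (1/(2*((n:ℝ) - 1))) * (-((n:ℝ) * DA x k - DB x k)
            - ((n:ℝ) * (∑ a, v a * DA x a) - (∑ a, v a * DB x a)) * u x k) := by
      intro k
      have innerL : ∀ l, ∑ j, v j *
          ((DA x k * g x j l + DB x k * u x j * u x l
            + B x * (Du x k j * u x l + u x j * Du x k l))
          - (DA x l * g x j k + DB x l * u x j * u x k
            + B x * (Du x l j * u x k + u x j * Du x l k)))
          = DA x k * u x l - DB x k * u x l - B x * Du x k l
            - DA x l * u x k + DB x l * u x k + B x * Du x l k := by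
        intro l
        have e : ∀ j, v j *
            ((DA x k * g x j l + DB x k * u x j * u x l
              + B x * (Du x k j * u x l + u x j * Du x k l))
            - (DA x l * g x j k + DB x l * u x j * u x k
              + B x * (Du x l j * u x k + u x j * Du x l k)))
            = DA x k * (v j * g x j l) + (DB x k * u x l) * (v j * u x j)
              + (B x * u x l) * (v j * Du x k j) + (B x * Du x k l) * (v j * u x j)
              - (DA x l * (v j * g x j k) + (DB x l * u x k) * (v j * u x j)
                + (B x * u x k) * (v j * Du x l j)
                + (B x * Du x l k) * (v j * u x j)) := fun j => by ring
        simp only [e]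
        simp only [Finset.sum_sub_distrib, Finset.sum_add_distrib, ← Finset.mul_sum]
        rw [hv_g l, hv_g k, hv_u, hv_Du k, hv_Du l]
        ring
      have innerR : ∀ l, ∑ j, v j *
          ((1/(2*((n:ℝ) - 1))) * (g x j l * ((n:ℝ) * DA x k - DB x k)
            - g x j k * ((n:ℝ) * DA x l - DB x l)))
          = (1/(2*((n:ℝ) - 1))) * (u x l * ((n:ℝ) * DA x k - DB x k)
            - u x k * ((n:ℝ) * DA x l - DB x l)) := by
        intro l
        have e : ∀ j, v j *
            ((1/(2*((n:ℝ) - 1))) * (g x j l * ((n:ℝ) * DA x k - DB x k)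
              - g x j k * ((n:ℝ) * DA x l - DB x l)))
            = ((1/(2*((n:ℝ) - 1))) * ((n:ℝ) * DA x k - DB x k)) * (v j * g x j l)
              - ((1/(2*((n:ℝ) - 1))) * ((n:ℝ) * DA x l - DB x l)) * (v j * g x j k) :=
          fun j => by ring
        simp only [e]
        rw [Finset.sum_sub_distrib, ← Finset.mul_sum, ← Finset.mul_sum, hv_g l, hv_g k]
        ring
      calc -DA x k + DB x k - (∑ a, v a * DA x a) * u x k
            + (∑ a, v a * DB x a) * u x k + B x * (∑ a, v a * Du x a k)
          = ∑ l, v l * (DA x k * u x l - DB x k * u x l - B x * Du x k l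
              - DA x l * u x k + DB x l * u x k + B x * Du x l k) := by
            symm
            have e : ∀ l, v l * (DA x k * u x l - DB x k * u x l - B x * Du x k l
                - DA x l * u x k + DB x l * u x k + B x * Du x l k)
                = DA x k * (v l * u x l) - DB x k * (v l * u x l)
                  - B x * (v l * Du x k l) - u x k * (v l * DA x l)
                  + u x k * (v l * DB x l) + B x * (v l * Du x l k) := fun l => by ring
            simp only [e]
            simp only [Finset.sum_sub_distrib, Finset.sum_add_distrib, ← Finset.mul_sum]
            rw [hv_u, hv_Du k]
            ring
        _ = ∑ l, ∑ j, v l * (v j *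
              ((DA x k * g x j l + DB x k * u x j * u x l
                + B x * (Du x k j * u x l + u x j * Du x k l))
              - (DA x l * g x j k + DB x l * u x j * u x k
                + B x * (Du x l j * u x k + u x j * Du x l k)))) := by
            refine Finset.sum_congr rfl fun l _ => ?_
            rw [← Finset.mul_sum, innerL l]
        _ = ∑ l, ∑ j, v l * (v j *
              ((1/(2*((n:ℝ) - 1))) * (g x j l * ((n:ℝ) * DA x k - DB x k)
                - g x j k * ((n:ℝ) * DA x l - DB x l)))) := by
            refine Finset.sum_congr rfl fun l _ => Finset.sum_congr rfl fun j _ => ?_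
            rw [hWeyl x k l j]
        _ = ∑ l, v l * ((1/(2*((n:ℝ) - 1))) * (u x l * ((n:ℝ) * DA x k - DB x k)
              - u x k * ((n:ℝ) * DA x l - DB x l))) := by
            refine Finset.sum_congr rfl fun l _ => ?_
            rw [← Finset.mul_sum, innerR l]
        _ = (1/(2*((n:ℝ) - 1))) * (-((n:ℝ) * DA x k - DB x k)
              - ((n:ℝ) * (∑ a, v a * DA x a) - (∑ a, v a * DB x a)) * u x k) := by
            have e : ∀ l, v l * ((1/(2*((n:ℝ) - 1))) * (u x l * ((n:ℝ) * DA x k - DB x k)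
                - u x k * ((n:ℝ) * DA x l - DB x l)))
                = ((1/(2*((n:ℝ) - 1))) * ((n:ℝ) * DA x k - DB x k)) * (v l * u x l)
                  - ((1/(2*((n:ℝ) - 1))) * (n:ℝ) * u x k) * (v l * DA x l)
                  + ((1/(2*((n:ℝ) - 1))) * u x k) * (v l * DB x l) := fun l => by ring
            simp only [e]
            simp only [Finset.sum_sub_distrib, Finset.sum_add_distrib, ← Finset.mul_sum]
            rw [hv_u]
            ring
    -- assemble: ∇γ = u * T
    have hT : ∀ k, ((n:ℝ) - 2) * DA x k + DB x k
        = u x k * ((2*((n:ℝ) - 1) * ((∑ a, v a * DA x a)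
          + B x * (∑ a, ∑ m, ginv x a m * Du x a m))
          - ((n:ℝ) * (∑ a, v a * DA x a) - (∑ a, v a * DB x a))) / ((n:ℝ) - 2)) := by
      intro k
      have e1 := F1 k
      have e2' : 2*((n:ℝ) - 1) * (-DA x k + DB x k - (∑ a, v a * DA x a) * u x k
          + (∑ a, v a * DB x a) * u x k + B x * (∑ a, v a * Du x a k))
          = -((n:ℝ) * DA x k - DB x k)
            - ((n:ℝ) * (∑ a, v a * DA x a) - (∑ a, v a * DB x a)) * u x k := by
        rw [F2 k]; field_simp
      have keyk : ((n:ℝ) - 2) * (((n:ℝ) - 2) * DA x k + DB x k)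
          = u x k * (2*((n:ℝ) - 1) * ((∑ a, v a * DA x a)
            + B x * (∑ a, ∑ m, ginv x a m * Du x a m))
            - ((n:ℝ) * (∑ a, v a * DA x a) - (∑ a, v a * DB x a))) := by
        linear_combination e2' - (2*((n:ℝ) - 1)) * e1
      rw [mul_div_assoc', eq_div_iff hN2]
      linear_combination keyk
    refine ⟨(2*((n:ℝ) - 1) * ((∑ a, v a * DA x a)
        + B x * (∑ a, ∑ m, ginv x a m * Du x a m))
        - ((n:ℝ) * (∑ a, v a * DA x a) - (∑ a, v a * DB x a))) / ((n:ℝ) - 2), hT, ?_⟩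
    calc ∑ k, ∑ m, ginv x k m * u x m * (((n:ℝ) - 2) * DA x k + DB x k)
        = ∑ k, v k * (u x k * ((2*((n:ℝ) - 1) * ((∑ a, v a * DA x a)
            + B x * (∑ a, ∑ m, ginv x a m * Du x a m))
            - ((n:ℝ) * (∑ a, v a * DA x a) - (∑ a, v a * DB x a))) / ((n:ℝ) - 2))) := by
          refine Finset.sum_congr rfl fun k _ => ?_
          rw [← Finset.sum_mul, ← hv k, hT k]
      _ = (∑ k, v k * u x k) * ((2*((n:ℝ) - 1) * ((∑ a, v a * DA x a)
            + B x * (∑ a, ∑ m, ginv x a m * Du x a m))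
            - ((n:ℝ) * (∑ a, v a * DA x a) - (∑ a, v a * DB x a))) / ((n:ℝ) - 2)) := by
          rw [Finset.sum_mul]
          exact Finset.sum_congr rfl fun k _ => by ring
      _ = -((2*((n:ℝ) - 1) * ((∑ a, v a * DA x a)
            + B x * (∑ a, ∑ m, ginv x a m * Du x a m))
            - ((n:ℝ) * (∑ a, v a * DA x a) - (∑ a, v a * DB x a))) / ((n:ℝ) - 2)) := by
          rw [hv_u]; ring
  constructor
  · intro x j
    obtain ⟨T, hT, hSum⟩ := key x
    rw [hSum, hT j]; ring
  · intro x j k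
    obtain ⟨T, hT, _⟩ := key x
    rw [hT j, hT k]; ring
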